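/- arXiv:1312.7320 — 2 statements merged into one kernel-verified Lean document; each statement's English description precedes it below -/
import Mathlib

section
/- Let $(A, \mathfrak{m}, k)$ be a noetherian local ring and let $(F^\bullet, d^\bullet)$ be a cochain complex of free $A$-modules of finite rank. If the base change map $\varphi^p \colon H^p(F^\bullet) \otimes_A k \to H^p(F^\bullet \otimes_A k)$ is surjective, then it is an isomorphism. -/
open TensorProduct IsLocalRing

open TensorProduct

section Defs

variable (A : Type*) [CommRing A] (k : Type*) [CommRing k] [Algebra A k]
variable {M0 M1 M2 : Type*} [AddCommGroup M0] [AddCommGroup M1] [AddCommGroup M2]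
  [Module A M0] [Module A M1] [Module A M2]

/-- Cohomology of `M0 → M1 → M2` at the middle spot. -/
abbrev coh (d0 : M0 →ₗ[A] M1) (d1 : M1 →ₗ[A] M2) : Type _ :=
  LinearMap.ker d1 ⧸ (LinearMap.range d0).comap (LinearMap.ker d1).subtype

variable (d0 : M0 →ₗ[A] M1) (d1 : M1 →ₗ[A] M2)

/-- The map on kernels induced by `x ↦ 1 ⊗ x`. -/
noncomputable def kerBaseChange : LinearMap.ker d1 →ₗ[A] LinearMap.ker (d1.baseChange k) :=
  LinearMap.codRestrict ((LinearMap.ker (d1.baseChange k)).restrictScalars A)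
    (((TensorProduct.mk A k M1) 1).comp (LinearMap.ker d1).subtype)
    (fun x => by
      simp [LinearMap.mem_ker, (LinearMap.mem_ker.mp x.2)])

/-- The natural base change map `k ⊗ H(F) → H(F ⊗ k)` on cohomology. -/
noncomputable def cohBaseChange :
    k ⊗[A] coh A d0 d1 →ₗ[k] coh k (d0.baseChange k) (d1.baseChange k) :=
  LinearMap.liftBaseChange k <|
    Submodule.liftQ _
      (((Submodule.mkQ _).restrictScalars A).comp (kerBaseChange A k d1))
      (by
        rintro ⟨x, hx⟩ ⟨y, rfl⟩
        have : kerBaseChange A k d1 ⟨d0 y, hx⟩ ∈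
            (LinearMap.range (d0.baseChange k)).comap
              (LinearMap.ker (d1.baseChange k)).subtype := by
          refine ⟨1 ⊗ₜ y, ?_⟩
          rfl
        simpa [LinearMap.mem_ker, Submodule.Quotient.mk_eq_zero] using this)

end Defs

section L12
variable {A : Type*} [CommRing A] [IsLocalRing A]
variable {M : Type*} [AddCommGroup M] [Module A M]

lemma mk_one_surj : Function.Surjective (TensorProduct.mk A (ResidueField A) M 1) := by
  intro x
  induction x using TensorProduct.induction_on with
  | zero => exact ⟨0, map_zero _⟩
  | tmul c m =>
    obtain ⟨a, rfl⟩ := IsLocalRing.residue_surjective (R := A) c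
    refine ⟨a • m, ?_⟩
    have h1 : residue A a = a • (1 : ResidueField A) := by
      rw [Algebra.smul_def, mul_one]; rfl
    rw [TensorProduct.mk_apply, ← TensorProduct.smul_tmul, h1]
  | add x y hx hy =>
    obtain ⟨m, rfl⟩ := hx; obtain ⟨n, rfl⟩ := hy
    exact ⟨m + n, map_add _ _ _⟩

lemma tmul_one_eq_zero_iff (x : M) :
    (1 : ResidueField A) ⊗ₜ[A] x = 0 ↔ x ∈ (maximalIdeal A) • (⊤ : Submodule A M) := by
  constructor
  · intro h
    have := congrArg (TensorProduct.quotTensorEquivQuotSMul M (maximalIdeal A)) h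
    have h2 := TensorProduct.quotTensorEquivQuotSMul_mk_tmul (M := M) (maximalIdeal A) 1 x
    rw [one_smul] at h2
    exact (Submodule.Quotient.mk_eq_zero _).mp (h2.symm.trans (this.trans (LinearEquiv.map_zero _)))
  · intro h
    have h1 : (1 : ResidueField A) = Ideal.Quotient.mk (maximalIdeal A) 1 := rfl
    apply (TensorProduct.quotTensorEquivQuotSMul M (maximalIdeal A)).injective
    have h2 := TensorProduct.quotTensorEquivQuotSMul_mk_tmul (M := M) (maximalIdeal A) 1 x
    rw [one_smul] at h2
    exact h2.trans (((Submodule.Quotient.mk_eq_zero _).mpr h).trans (LinearEquiv.map_zero _).symm)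

end L12

section L3

variable {A : Type*} [CommRing A] [IsLocalRing A] [IsNoetherianRing A]
variable {M : Type*} [AddCommGroup M] [Module A M] [Module.Free A M] [Module.Finite A M]

theorem free_of_inf_smul_le (N : Submodule A M)
    (hN : N ⊓ (maximalIdeal A) • (⊤ : Submodule A M) ≤ (maximalIdeal A) • N) :
    Module.Free A ↥N := by
  classical
  set k := ResidueField A
  haveI : Module.Finite k (k ⊗[A] M) := Module.Finite.base_change A k M
  haveI : IsNoetherian k (k ⊗[A] M) := isNoetherian_of_isNoetherianRing_of_finite k _
  set t : Set (k ⊗[A] M) := (fun n : M => (1 : k) ⊗ₜ[A] n) '' ↑N with ht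
  obtain ⟨s, hst, hspan, hsli⟩ := exists_linearIndependent k t
  set bset := (hsli.linearIndepOn_id' Subtype.range_coe).extend (Set.subset_univ s) with hbset
  have hbsub : s ⊆ bset := (hsli.linearIndepOn_id' Subtype.range_coe).subset_extend _
  set B : Module.Basis bset k (k ⊗[A] M) := Module.Basis.extend (hsli.linearIndepOn_id' Subtype.range_coe) with hB
  haveI : Fintype bset := FiniteDimensional.fintypeBasisIndex B
  have hBapp : ∀ j : bset, B j = (j : k ⊗[A] M) := fun j => Module.Basis.extend_apply_self (hsli.linearIndepOn_id' Subtype.range_coe) j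
  -- choose lifts
  have hex : ∀ j : bset, ∃ x : M, (1 : k) ⊗ₜ[A] x = (j : k ⊗[A] M) ∧
      ((j : k ⊗[A] M) ∈ s → x ∈ N) := by
    intro j
    by_cases hj : (j : k ⊗[A] M) ∈ s
    · obtain ⟨n, hn, hn'⟩ := hst hj
      exact ⟨n, hn', fun _ => hn⟩
    · obtain ⟨x, hx⟩ := mk_one_surj (A := A) (M := M) (j : k ⊗[A] M)
      exact ⟨x, hx, fun h => absurd h hj⟩
  choose g hg1 hg2 using hex
  -- spanning of M
  have hsmul1 : ∀ (a : A) (m : M), (1 : k) ⊗ₜ[A] (a • m) = residue A a • ((1:k) ⊗ₜ[A] m) := by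
    intro a m
    have h1 : residue A a = a • (1 : k) := by rw [Algebra.smul_def, mul_one]; rfl
    rw [← TensorProduct.smul_tmul, h1, TensorProduct.smul_tmul']
    simp
  have htop : ∀ x : M, x ∈ Submodule.span A (Set.range g) ⊔
      (maximalIdeal A) • (⊤ : Submodule A M) := by
    intro x
    choose a ha using fun j : bset => IsLocalRing.residue_surjective
      (R := A) (B.repr ((1 : k) ⊗ₜ[A] x) j)
    have hsum : (1 : k) ⊗ₜ[A] (x - ∑ j : bset, a j • g j) = 0 := by
      rw [TensorProduct.tmul_sub, sub_eq_zero, TensorProduct.tmul_sum]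
      have : ∀ j : bset, (1:k) ⊗ₜ[A] (a j • g j) = B.repr ((1 : k) ⊗ₜ[A] x) j • B j := by
        intro j
        rw [hsmul1, ha, hg1, hBapp]
      rw [Finset.sum_congr rfl (fun j _ => this j)]
      exact (B.sum_repr _).symm
    have hm := (tmul_one_eq_zero_iff _).mp hsum
    have : x = (∑ j : bset, a j • g j) + (x - ∑ j : bset, a j • g j) := by abel
    rw [this]
    exact Submodule.add_mem_sup
      (Submodule.sum_mem _ fun j _ => Submodule.smul_mem _ _
        (Submodule.subset_span ⟨j, rfl⟩)) hm
  have hStop : (⊤ : Submodule A M) ≤ Submodule.span A (Set.range g) :=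
    Submodule.le_of_le_smul_of_le_jacobson_bot (Module.finite_def.mp ‹_›)
      ((IsLocalRing.jacobson_eq_maximalIdeal ⊥ bot_ne_top).ge) (fun x _ => htop x)
  -- injectivity of the linear combination map
  set Φ := Fintype.linearCombination A g with hΦ
  have hΦsurj : Function.Surjective Φ := by
    rw [← LinearMap.range_eq_top, Fintype.range_linearCombination]
    exact top_le_iff.mp hStop
  set ι := Module.Free.ChooseBasisIndex A M
  set b0 := Module.Free.chooseBasis A M
  have eqv : bset ≃ ι := B.indexEquiv (b0.baseChange k)
  set E : M ≃ₗ[A] (bset → A) :=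
    b0.equivFun ≪≫ₗ (LinearEquiv.funCongrLeft A A eqv) with hE
  have hΦinj : Function.Injective Φ := by
    set f : M →ₗ[A] M := Φ ∘ₗ E.toLinearMap with hf
    have hfs : Function.Surjective f := hΦsurj.comp E.surjective
    have hfi := OrzechProperty.injective_of_surjective_endomorphism f hfs
    intro u v h
    have : f (E.symm u) = f (E.symm v) := by
      simp only [hf, LinearMap.comp_apply, LinearEquiv.coe_coe, LinearEquiv.apply_symm_apply]
      exact h
    exact E.symm.injective (hfi this)
  have hgli : LinearIndependent A g := by
    rw [Fintype.linearIndependent_iff]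
    intro c hc j
    have : Φ c = Φ 0 := by
      rw [hΦ, Fintype.linearCombination_apply, hc, map_zero]
    exact congrFun (hΦinj this) j
  -- the subfamily in N
  set v : {j : bset // (j : k ⊗[A] M) ∈ s} → M := fun j => g j.1 with hv
  have hvN : ∀ j, v j ∈ N := fun j => hg2 _ j.2
  have hvli : LinearIndependent A v :=
    hgli.comp (fun j => j.1) (fun j j' h => Subtype.ext h)
  have hNle : N ≤ Submodule.span A (Set.range v) ⊔ (maximalIdeal A) • N := by
    intro x hx
    obtain ⟨c, hc⟩ := hΦsurj x
    rw [hΦ, Fintype.linearCombination_apply] at hc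
    have hrepr : ∀ j : bset, B.repr ((1 : k) ⊗ₜ[A] x) j = residue A (c j) := by
      have hxe : (1:k) ⊗ₜ[A] x = ∑ j : bset, residue A (c j) • B j := by
        rw [← hc]
        rw [show ((1:k) ⊗ₜ[A] (∑ j : bset, c j • g j)) = ∑ j : bset, (1:k) ⊗ₜ[A] (c j • g j)
          from TensorProduct.tmul_sum _ _ _]
        exact Finset.sum_congr rfl fun j _ => by rw [hsmul1, hg1, hBapp]
      intro j
      rw [hxe]
      rw [B.repr_sum_self]
    have hxspan : (1 : k) ⊗ₜ[A] x ∈ Submodule.span k s := by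
      rw [hspan]
      exact Submodule.subset_span ⟨x, hx, rfl⟩
    have hs_eq : s = ⇑B '' {j : bset | (j : k ⊗[A] M) ∈ s} := by
      ext y
      constructor
      · intro hy
        exact ⟨⟨y, hbsub hy⟩, hy, hBapp _⟩
      · rintro ⟨j, hj, rfl⟩
        rw [hBapp]; exact hj
    rw [hs_eq] at hxspan
    have hsupp := B.mem_span_image.mp hxspan
    have hcm : ∀ j : bset, (j : k ⊗[A] M) ∉ s → c j ∈ maximalIdeal A := by
      intro j hj
      have h0 : B.repr ((1 : k) ⊗ₜ[A] x) j = 0 := by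
        by_contra hne
        exact hj (hsupp (Finsupp.mem_support_iff.mpr hne))
      rw [hrepr] at h0
      exact Ideal.Quotient.eq_zero_iff_mem.mp h0
    have hsplit := Finset.sum_filter_add_sum_filter_not Finset.univ
      (fun j : bset => (j : k ⊗[A] M) ∈ s) (fun j => c j • g j)
    rw [hc] at hsplit
    set x1 := ∑ j ∈ Finset.univ.filter (fun j : bset => (j : k ⊗[A] M) ∈ s), c j • g j with hx1d
    set x2 := ∑ j ∈ Finset.univ.filter (fun j : bset => ¬ (j : k ⊗[A] M) ∈ s), c j • g j
    have hx1span : x1 ∈ Submodule.span A (Set.range v) :=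
      Submodule.sum_mem _ fun j hj => Submodule.smul_mem _ _
        (Submodule.subset_span ⟨⟨j, (Finset.mem_filter.mp hj).2⟩, rfl⟩)
    have hx1N : x1 ∈ N :=
      Submodule.sum_mem _ fun j hj => Submodule.smul_mem _ _
        (hg2 _ (Finset.mem_filter.mp hj).2)
    have hx2m : x2 ∈ (maximalIdeal A) • (⊤ : Submodule A M) :=
      Submodule.sum_mem _ fun j hj => Submodule.smul_mem_smul
        (hcm _ (Finset.mem_filter.mp hj).2) trivial
    have hx2N : x2 ∈ N := by
      have : x2 = x - x1 := by rw [← hsplit]; abel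
      rw [this]; exact Submodule.sub_mem _ hx hx1N
    have hx2 : x2 ∈ (maximalIdeal A) • N := hN ⟨hx2N, hx2m⟩
    have : x = x1 + x2 := hsplit.symm
    rw [this]
    exact Submodule.add_mem_sup hx1span hx2
  have hNspan : N = Submodule.span A (Set.range v) := by
    refine le_antisymm ?_ (Submodule.span_le.mpr ?_)
    · exact Submodule.le_of_le_smul_of_le_jacobson_bot (IsNoetherian.noetherian N)
        ((IsLocalRing.jacobson_eq_maximalIdeal ⊥ bot_ne_top).ge) hNle
    · rintro y ⟨j, rfl⟩; exact hvN j
  rw [hNspan]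
  exact Module.Free.of_basis (Module.Basis.span hvli)

end L3

section AuxDefs

variable (A : Type*) [CommRing A] (k : Type*) [CommRing k] [Algebra A k]
variable {M0 M1 M2 : Type*} [AddCommGroup M0] [AddCommGroup M1] [AddCommGroup M2]
  [Module A M0] [Module A M1] [Module A M2]
variable (d0 : M0 →ₗ[A] M1) (d1 : M1 →ₗ[A] M2)

lemma cohBaseChange_one_tmul_mk (z : LinearMap.ker d1) :
    cohBaseChange A k d0 d1 ((1 : k) ⊗ₜ[A] (Submodule.Quotient.mk z)) =
      Submodule.Quotient.mk (kerBaseChange A k d1 z) := by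
  rw [cohBaseChange, LinearMap.liftBaseChange_tmul, Submodule.liftQ_apply]
  simp

lemma kerBaseChange_coe (z : LinearMap.ker d1) :
    ((kerBaseChange A k d1 z : LinearMap.ker (d1.baseChange k)) : k ⊗[A] M1) =
      (1 : k) ⊗ₜ[A] (z : M1) := rfl


end AuxDefs

theorem stmt4 {A : Type*} [CommRing A] [IsLocalRing A] [IsNoetherianRing A]
    {F0 : Type*} [AddCommGroup F0] [Module A F0] [Module.Free A F0] [Module.Finite A F0]
    {F1 : Type*} [AddCommGroup F1] [Module A F1] [Module.Free A F1] [Module.Finite A F1]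
    {F2 : Type*} [AddCommGroup F2] [Module A F2] [Module.Free A F2] [Module.Finite A F2]
    (d0 : F0 →ₗ[A] F1) (d1 : F1 →ₗ[A] F2) (hc : d1 ∘ₗ d0 = 0)
    (hsurj : Function.Surjective (cohBaseChange A (ResidueField A) d0 d1)) :
    Function.Bijective (cohBaseChange A (ResidueField A) d0 d1) := by
  classical
  set k := ResidueField A
  have hd1d0 : ∀ w : F0, d0 w ∈ LinearMap.ker d1 := by
    intro w
    rw [LinearMap.mem_ker, ← LinearMap.comp_apply, hc, LinearMap.zero_apply]
  -- Step 1: surjectivity condition gives the lifting property (S)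
  have hS : ∀ x : F1, d1 x ∈ (maximalIdeal A) • (⊤ : Submodule A F2) →
      ∃ z ∈ LinearMap.ker d1, x - z ∈ (maximalIdeal A) • (⊤ : Submodule A F1) := by
    intro x hx
    have hξ : (1 : k) ⊗ₜ[A] x ∈ LinearMap.ker (d1.baseChange k) := by
      rw [LinearMap.mem_ker, LinearMap.baseChange_tmul]
      exact (tmul_one_eq_zero_iff _).mpr hx
    obtain ⟨y, hy⟩ := hsurj (Submodule.Quotient.mk ⟨(1 : k) ⊗ₜ[A] x, hξ⟩)
    obtain ⟨h, rfl⟩ := mk_one_surj (A := A) (M := coh A d0 d1) y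
    obtain ⟨z', rfl⟩ := Submodule.Quotient.mk_surjective _ h
    rw [TensorProduct.mk_apply, cohBaseChange_one_tmul_mk] at hy
    rw [Submodule.Quotient.eq] at hy
    obtain ⟨w, hw⟩ := hy
    obtain ⟨w0, rfl⟩ := mk_one_surj (A := A) (M := F0) w
    have hw' : (1 : k) ⊗ₜ[A] (d0 w0) = (1 : k) ⊗ₜ[A] (z' : F1) - (1 : k) ⊗ₜ[A] x := by
      simpa [LinearMap.baseChange_tmul, kerBaseChange_coe] using hw
    have hmem : ((z' : F1) - x) - d0 w0 ∈ (maximalIdeal A) • (⊤ : Submodule A F1) := by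
      apply (tmul_one_eq_zero_iff _).mp
      rw [TensorProduct.tmul_sub, TensorProduct.tmul_sub, hw']
      abel
    refine ⟨(z' : F1) - d0 w0, ?_, ?_⟩
    · exact Submodule.sub_mem _ z'.2 (hd1d0 w0)
    · have : x - ((z' : F1) - d0 w0) = -(((z' : F1) - x) - d0 w0) := by abel
      rw [this]
      exact Submodule.neg_mem _ hmem
  -- Step 2: range d1 is free
  have hB2 : LinearMap.range d1 ⊓ (maximalIdeal A) • (⊤ : Submodule A F2) ≤
      (maximalIdeal A) • LinearMap.range d1 := by
    rintro b ⟨⟨x, rfl⟩, hb⟩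
    obtain ⟨z, hz, hxz⟩ := hS x hb
    have h1 : d1 x = d1 (x - z) := by
      rw [map_sub, LinearMap.mem_ker.mp hz, sub_zero]
    rw [h1]
    have h2 : d1 (x - z) ∈ Submodule.map d1 ((maximalIdeal A) • (⊤ : Submodule A F1)) :=
      ⟨x - z, hxz, rfl⟩
    rwa [Submodule.map_smul'', Submodule.map_top] at h2
  haveI hfree : Module.Free A ↥(LinearMap.range d1) := free_of_inf_smul_le _ hB2
  -- Step 3: construct the projection p onto ker d1
  obtain ⟨σ, hσ⟩ := Module.projective_lifting_property d1.rangeRestrict LinearMap.id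
    d1.surjective_rangeRestrict
  set p : F1 →ₗ[A] F1 := LinearMap.id - σ ∘ₗ d1.rangeRestrict with hp
  have hσd : ∀ u : LinearMap.range d1, d1 (σ u) = (u : F2) := by
    intro u
    have := congrArg (fun f => ((f u : LinearMap.range d1) : F2)) hσ
    simpa using this
  have hpker : ∀ x : F1, p x ∈ LinearMap.ker d1 := by
    intro x
    rw [LinearMap.mem_ker, hp]
    simp only [LinearMap.sub_apply, LinearMap.id_apply, LinearMap.comp_apply, map_sub]
    rw [hσd]
    simp
  have hpid : ∀ z ∈ LinearMap.ker d1, p z = z := by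
    intro z hz
    have h0 : d1.rangeRestrict z = 0 := Subtype.ext (by simpa using hz)
    rw [hp]
    simp [h0]
  set p' : F1 →ₗ[A] ↥(LinearMap.ker d1) := LinearMap.codRestrict _ p hpker with hp'
  -- Step 4: injectivity
  refine ⟨?_, hsurj⟩
  rw [injective_iff_map_eq_zero]
  intro x hx
  obtain ⟨h, rfl⟩ := mk_one_surj (A := A) (M := coh A d0 d1) x
  obtain ⟨z', rfl⟩ := Submodule.Quotient.mk_surjective _ h
  rw [TensorProduct.mk_apply, cohBaseChange_one_tmul_mk, Submodule.Quotient.mk_eq_zero] at hx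
  obtain ⟨w, hw⟩ := hx
  obtain ⟨w0, rfl⟩ := mk_one_surj (A := A) (M := F0) w
  have hw' : (1 : k) ⊗ₜ[A] ((z' : F1) - d0 w0) = 0 := by
    have hw2 : (1 : k) ⊗ₜ[A] (d0 w0) = (1 : k) ⊗ₜ[A] (z' : F1) := by
      simpa [LinearMap.baseChange_tmul, kerBaseChange_coe] using hw
    rw [TensorProduct.tmul_sub, hw2]
    abel
  have hu : (z' : F1) - d0 w0 ∈ (maximalIdeal A) • (⊤ : Submodule A F1) :=
    (tmul_one_eq_zero_iff _).mp hw'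
  set u : F1 := (z' : F1) - d0 w0 with hud
  have hz'eq : z' = (⟨d0 w0, hd1d0 w0⟩ : LinearMap.ker d1) + p' u := by
    apply Subtype.ext
    have hcoe : ((p' u : LinearMap.ker d1) : F1) = p u := rfl
    have hpu : p u = u := by
      rw [hud, map_sub, hpid _ z'.2, hpid _ (hd1d0 w0)]
    rw [Submodule.coe_add, hcoe, hpu, hud]
    abel
  have hpu_mem : p' u ∈ (maximalIdeal A) • (⊤ : Submodule A ↥(LinearMap.ker d1)) := by
    have h3 : p' u ∈ Submodule.map p' ((maximalIdeal A) • (⊤ : Submodule A F1)) := ⟨u, hu, rfl⟩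
    rw [Submodule.map_smul''] at h3
    exact Submodule.smul_mono le_rfl le_top h3
  rw [TensorProduct.mk_apply]
  apply (tmul_one_eq_zero_iff _).mpr
  rw [hz'eq]
  have hmk0 : (Submodule.Quotient.mk (⟨d0 w0, hd1d0 w0⟩ : LinearMap.ker d1) : coh A d0 d1) = 0 :=
    (Submodule.Quotient.mk_eq_zero _).mpr ⟨w0, rfl⟩
  rw [Submodule.Quotient.mk_add, hmk0, zero_add]
  have h4 : (Submodule.Quotient.mk (p' u) : coh A d0 d1) ∈
      Submodule.map (Submodule.mkQ _) ((maximalIdeal A) • (⊤ : Submodule A ↥(LinearMap.ker d1))) :=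
    ⟨p' u, hpu_mem, rfl⟩
  rwa [Submodule.map_smul'', Submodule.map_top, Submodule.range_mkQ] at h4
end

section
/- Let $(A, \mathfrak{m}, k)$ be a noetherian local ring and $(F^\bullet, d^\bullet)$ a cochain complex of free $A$-modules of finite rank. Suppose the base change maps $\varphi^p$ and $\varphi^{p-1}$ are both surjective. Then for every $A$-algebra $B$, the natural map $H^p(F^\bullet) \otimes_A B \to H^p(F^\bullet \otimes_A B)$ is an isomorphism. -/
open TensorProduct IsLocalRing

open TensorProduct

section Aux

variable {A : Type*} [CommRing A] {k : Type*} [CommRing k] [Algebra A k]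
variable {M0 M1 M2 : Type*} [AddCommGroup M0] [AddCommGroup M1] [AddCommGroup M2]
  [Module A M0] [Module A M1] [Module A M2]
variable (d0 : M0 →ₗ[A] M1) (d1 : M1 →ₗ[A] M2)

lemma ker_subtype_baseChange_mem (w : k ⊗[A] (LinearMap.ker d1)) :
    (LinearMap.ker d1).subtype.baseChange k w ∈ LinearMap.ker (d1.baseChange k) := by
  rw [LinearMap.mem_ker, ← LinearMap.comp_apply, ← LinearMap.baseChange_comp]
  have : d1 ∘ₗ (LinearMap.ker d1).subtype = 0 := by
    ext z; exact z.2
  rw [this]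
  simp

lemma cohBaseChange_tmul (c : k) (z : LinearMap.ker d1)
    (h : c ⊗ₜ[A] (z : M1) ∈ LinearMap.ker (d1.baseChange k)) :
    cohBaseChange A k d0 d1 (c ⊗ₜ Submodule.Quotient.mk z) =
      Submodule.Quotient.mk ⟨c ⊗ₜ[A] (z : M1), h⟩ := by
  simp only [cohBaseChange, kerBaseChange, LinearMap.liftBaseChange_tmul,
    Submodule.liftQ_apply, LinearMap.coe_comp, Function.comp_apply,
    LinearMap.restrictScalars_apply, Submodule.mkQ_apply]
  show c • (Submodule.Quotient.mk (kerBaseChange A k d1 z) :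
    coh k (d0.baseChange k) (d1.baseChange k)) = _
  rw [← Submodule.Quotient.mk_smul]
  congr 1
  apply Subtype.ext
  show c • ((1 : k) ⊗ₜ[A] (z : M1)) = c ⊗ₜ[A] (z : M1)
  rw [TensorProduct.smul_tmul', smul_eq_mul, mul_one]

lemma mk_subtype_baseChange_mem_range (w : k ⊗[A] (LinearMap.ker d1)) :
    (Submodule.Quotient.mk ⟨(LinearMap.ker d1).subtype.baseChange k w,
        ker_subtype_baseChange_mem d1 w⟩ :
      coh k (d0.baseChange k) (d1.baseChange k)) ∈
      LinearMap.range (cohBaseChange A k d0 d1) := by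
  induction w using TensorProduct.induction_on with
  | zero =>
    have : (⟨(LinearMap.ker d1).subtype.baseChange k 0, ker_subtype_baseChange_mem d1 0⟩ :
        LinearMap.ker (d1.baseChange k)) = 0 := Subtype.ext (by simp)
    rw [this, Submodule.Quotient.mk_zero]
    exact zero_mem _
  | tmul c z =>
    refine ⟨c ⊗ₜ Submodule.Quotient.mk z, ?_⟩
    rw [cohBaseChange_tmul d0 d1 c z (by simpa using ker_subtype_baseChange_mem d1 (c ⊗ₜ z))]
    congr 1
  | add w1 w2 h1 h2 =>
    have : (⟨(LinearMap.ker d1).subtype.baseChange k (w1 + w2),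
        ker_subtype_baseChange_mem d1 (w1 + w2)⟩ : LinearMap.ker (d1.baseChange k)) =
        ⟨_, ker_subtype_baseChange_mem d1 w1⟩ + ⟨_, ker_subtype_baseChange_mem d1 w2⟩ :=
      Subtype.ext (by simp [map_add])
    rw [this, Submodule.Quotient.mk_add]
    exact add_mem h1 h2

/-- Corestriction of `ker d1 ⊗ k → M1 ⊗ k` to the kernel of `d1 ⊗ k`. -/
noncomputable def kerCor : k ⊗[A] (LinearMap.ker d1) →ₗ[k] LinearMap.ker (d1.baseChange k) :=
  LinearMap.codRestrict (LinearMap.ker (d1.baseChange k))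
    ((LinearMap.ker d1).subtype.baseChange k) (ker_subtype_baseChange_mem d1)

lemma range_cohBaseChange :
    LinearMap.range (cohBaseChange A k d0 d1) =
      LinearMap.range ((Submodule.mkQ _) ∘ₗ kerCor d1 :
        k ⊗[A] (LinearMap.ker d1) →ₗ[k] coh k (d0.baseChange k) (d1.baseChange k)) := by
  apply le_antisymm
  · rintro x ⟨t, rfl⟩
    induction t using TensorProduct.induction_on with
    | zero => simpa using zero_mem _
    | tmul c m =>
      obtain ⟨z, rfl⟩ := Submodule.Quotient.mk_surjective _ m
      have h : c ⊗ₜ[A] (z : M1) ∈ LinearMap.ker (d1.baseChange k) := by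
        simpa using ker_subtype_baseChange_mem d1 (c ⊗ₜ z)
      rw [cohBaseChange_tmul d0 d1 c z h]
      refine ⟨c ⊗ₜ z, ?_⟩
      simp only [LinearMap.coe_comp, Function.comp_apply, Submodule.mkQ_apply, kerCor,
        LinearMap.codRestrict_apply]
      congr 1
    | add t1 t2 h1 h2 =>
      rw [map_add]; exact add_mem h1 h2
  · rintro x ⟨w, rfl⟩
    have h1 : kerCor d1 w = ⟨(LinearMap.ker d1).subtype.baseChange k w,
        ker_subtype_baseChange_mem d1 w⟩ := Subtype.ext rfl
    simp only [LinearMap.coe_comp, Function.comp_apply, Submodule.mkQ_apply, h1]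
    exact mk_subtype_baseChange_mem_range d0 d1 w

end Aux

set_option maxHeartbeats 2000000

theorem stmt8 {A : Type*} [CommRing A] [IsLocalRing A] [IsNoetherianRing A]
    {F0 : Type*} [AddCommGroup F0] [Module A F0] [Module.Free A F0] [Module.Finite A F0]
    {F1 : Type*} [AddCommGroup F1] [Module A F1] [Module.Free A F1] [Module.Finite A F1]
    {F2 : Type*} [AddCommGroup F2] [Module A F2] [Module.Free A F2] [Module.Finite A F2]
    {F3 : Type*} [AddCommGroup F3] [Module A F3] [Module.Free A F3] [Module.Finite A F3]
    (d0 : F0 →ₗ[A] F1) (d1 : F1 →ₗ[A] F2) (d2 : F2 →ₗ[A] F3)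
    (hc01 : d1 ∘ₗ d0 = 0) (hc12 : d2 ∘ₗ d1 = 0)
    (hp : Function.Surjective (cohBaseChange A (ResidueField A) d1 d2))
    (hpm1 : Function.Surjective (cohBaseChange A (ResidueField A) d0 d1))
    (B : Type*) [CommRing B] [Algebra A B] :
    Function.Bijective (cohBaseChange A B d1 d2) := by
  classical
  -- `d1` maps into `ker d2`
  have hd1mem : ∀ y : F1, d1 y ∈ LinearMap.ker d2 := fun y => by
    simpa using LinearMap.congr_fun hc12 y
  -- the injection induced by `d2` on `F2 ⧸ ker d2`
  let u : (F2 ⧸ LinearMap.ker d2) →ₗ[A] F3 := (LinearMap.ker d2).liftQ d2 le_rfl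
  have hu : u ∘ₗ (LinearMap.ker d2).mkQ = d2 := (LinearMap.ker d2).liftQ_mkQ d2 le_rfl
  -- `d1` corestricted to `ker d2`
  let d1c : F1 →ₗ[A] LinearMap.ker d2 := LinearMap.codRestrict (LinearMap.ker d2) d1 hd1mem
  have hd1split : (LinearMap.ker d2).subtype ∘ₗ d1c = d1 := by ext y; rfl
  have hmkQsub : (LinearMap.ker d2).mkQ ∘ₗ (LinearMap.ker d2).subtype = 0 := by
    ext z
    simpa [Submodule.Quotient.mk_eq_zero] using z.2
  -- Step 1 : over the residue field, the kernel of `d2 ⊗ k` comes from `ker d2`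
  have hkerk : ∀ x ∈ LinearMap.ker (d2.baseChange (ResidueField A)),
      x ∈ LinearMap.range ((LinearMap.ker d2).subtype.baseChange (ResidueField A)) := by
    intro x hx
    have htop := range_cohBaseChange d1 d2 (k := ResidueField A)
    rw [LinearMap.range_eq_top.mpr hp] at htop
    have hmem : (Submodule.Quotient.mk ⟨x, hx⟩ :
          coh (ResidueField A) (d1.baseChange (ResidueField A))
            (d2.baseChange (ResidueField A))) ∈ LinearMap.range
        ((Submodule.mkQ _) ∘ₗ kerCor d2 :
          (ResidueField A) ⊗[A] (LinearMap.ker d2) →ₗ[ResidueField A]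
            coh (ResidueField A) (d1.baseChange (ResidueField A))
              (d2.baseChange (ResidueField A))) := by
      rw [← htop]; exact Submodule.mem_top
    obtain ⟨w, hw⟩ := hmem
    simp only [LinearMap.coe_comp, Function.comp_apply, Submodule.mkQ_apply] at hw
    have hdiff := (Submodule.Quotient.eq _).mp hw
    obtain ⟨s, hs⟩ := hdiff
    -- `hs : (d1.baseChange k) s = (kerCor d2 w : _) - x`
    refine ⟨w - d1c.baseChange (ResidueField A) s, ?_⟩
    have hval : (LinearMap.ker d2).subtype.baseChange (ResidueField A)
        (d1c.baseChange (ResidueField A) s) = d1.baseChange (ResidueField A) s := by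
      rw [← LinearMap.comp_apply, ← LinearMap.baseChange_comp, hd1split]
    have hKw : (LinearMap.ker d2).subtype.baseChange (ResidueField A) w
        = (kerCor d2 w : (ResidueField A) ⊗[A] F2) := by
      simp [kerCor]
    rw [map_sub, hval, hKw, hs]
    simp [sub_sub_cancel]
  -- Step 2 : `k ⊗ u` is injective
  have hQinj : Function.Injective (u.lTensor (ResidueField A)) := by
    rw [← LinearMap.ker_eq_bot, eq_bot_iff]
    rintro y hy
    rw [LinearMap.mem_ker] at hy
    obtain ⟨x, rfl⟩ := LinearMap.lTensor_surjective (ResidueField A)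
      (Submodule.mkQ_surjective (LinearMap.ker d2)) y
    have hx0 : x ∈ LinearMap.ker (d2.baseChange (ResidueField A)) := by
      rw [LinearMap.mem_ker]
      have : (d2.baseChange (ResidueField A)) x = (d2.lTensor (ResidueField A)) x :=
        congrFun (LinearMap.baseChange_eq_ltensor d2) x
      rw [this, ← hu, LinearMap.lTensor_comp, LinearMap.comp_apply, hy]
    obtain ⟨w, hw⟩ := hkerk x hx0
    have : ((LinearMap.ker d2).mkQ.lTensor (ResidueField A)) x = 0 := by
      rw [← hw]
      have h1 : (LinearMap.ker d2).subtype.baseChange (ResidueField A) w =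
          (LinearMap.ker d2).subtype.lTensor (ResidueField A) w :=
        congrFun (LinearMap.baseChange_eq_ltensor _) w
      rw [h1, ← LinearMap.comp_apply, ← LinearMap.lTensor_comp, hmkQsub, LinearMap.lTensor_zero]
      rfl
    simpa [this] using Submodule.zero_mem ⊥
  -- Step 3 : `u` is a split injection, hence `F2 ⧸ ker d2` is projective
  obtain ⟨u', hu'⟩ := (IsLocalRing.split_injective_iff_lTensor_residueField_injective u).mpr hQinj
  have hproj : Module.Projective A (F2 ⧸ LinearMap.ker d2) := Module.Projective.of_split u u' hu'
  obtain ⟨σ, hσ⟩ := Module.projective_lifting_property (LinearMap.ker d2).mkQ LinearMap.id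
    (Submodule.mkQ_surjective (LinearMap.ker d2))
  have hσ' : ∀ y, (LinearMap.ker d2).mkQ (σ y) = y := fun y => by
    simpa using LinearMap.congr_fun hσ y
  -- Step 4 : over any `B`, the kernel of `d2 ⊗ B` comes from `ker d2`
  have huBinj : Function.Injective (u.baseChange B) := by
    have : u'.baseChange B ∘ₗ u.baseChange B = LinearMap.id := by
      rw [← LinearMap.baseChange_comp, hu', LinearMap.baseChange_id]
    exact Function.LeftInverse.injective (g := u'.baseChange B) (LinearMap.congr_fun this)
  have hkerB : ∀ x ∈ LinearMap.ker (d2.baseChange B),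
      x ∈ LinearMap.range ((LinearMap.ker d2).subtype.baseChange B) := by
    intro x hx
    have hπx : ((LinearMap.ker d2).mkQ.lTensor B) x = 0 := by
      apply huBinj
      have h1 : u.baseChange B (((LinearMap.ker d2).mkQ.lTensor B) x) =
          (u.lTensor B) (((LinearMap.ker d2).mkQ.lTensor B) x) :=
        congrFun (LinearMap.baseChange_eq_ltensor u) _
      rw [h1, ← LinearMap.comp_apply, ← LinearMap.lTensor_comp, hu]
      have h2 : (d2.lTensor B) x = d2.baseChange B x :=
        (congrFun (LinearMap.baseChange_eq_ltensor d2) x).symm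
      rw [h2, LinearMap.mem_ker.mp hx, map_zero]
    have := (lTensor_mkQ B (LinearMap.ker d2)).le (LinearMap.mem_ker.mpr hπx)
    obtain ⟨w, hw⟩ := this
    refine ⟨w, ?_⟩
    rw [← hw]
    exact congrFun (LinearMap.baseChange_eq_ltensor _) w
  -- the retraction `F2 → ker d2`
  let r2 : F2 →ₗ[A] LinearMap.ker d2 := LinearMap.codRestrict (LinearMap.ker d2)
    ((LinearMap.id : F2 →ₗ[A] F2) - σ ∘ₗ (LinearMap.ker d2).mkQ) (fun x => by
      have h0 : (LinearMap.ker d2).mkQ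
          (((LinearMap.id : F2 →ₗ[A] F2) - σ ∘ₗ (LinearMap.ker d2).mkQ) x) = 0 := by
        rw [LinearMap.sub_apply, map_sub, LinearMap.comp_apply, hσ', LinearMap.id_apply, sub_self]
      exact (Submodule.Quotient.mk_eq_zero _).mp h0)
  have hr2 : ∀ z : LinearMap.ker d2, r2 (z : F2) = z := by
    intro z
    apply Subtype.ext
    have hz : (LinearMap.ker d2).mkQ (z : F2) = 0 := by
      simpa [Submodule.Quotient.mk_eq_zero] using z.2
    show ((LinearMap.id : F2 →ₗ[A] F2) - σ ∘ₗ (LinearMap.ker d2).mkQ) (z : F2) = (z : F2)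
    rw [LinearMap.sub_apply, LinearMap.comp_apply, hz, map_zero, LinearMap.id_apply, sub_zero]
  -- the inverse map
  let q : LinearMap.ker d2 →ₗ[A] coh A d1 d2 := Submodule.mkQ _
  have hqr2d1 : (q ∘ₗ r2) ∘ₗ d1 = 0 := by
    ext y
    have h1 : r2 (d1 y) = ⟨d1 y, hd1mem y⟩ := hr2 ⟨d1 y, hd1mem y⟩
    simp only [LinearMap.coe_comp, Function.comp_apply, LinearMap.zero_apply, h1]
    exact (Submodule.Quotient.mk_eq_zero _).mpr ⟨y, rfl⟩
  let ψ₀ : B ⊗[A] F2 →ₗ[B] B ⊗[A] (coh A d1 d2) := (q ∘ₗ r2).baseChange B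
  let ψ : coh B (d1.baseChange B) (d2.baseChange B) →ₗ[B] B ⊗[A] (coh A d1 d2) :=
    Submodule.liftQ _ (ψ₀ ∘ₗ (LinearMap.ker (d2.baseChange B)).subtype) (by
      rintro ⟨x, hx⟩ ⟨t, ht⟩
      have hxval : x = d1.baseChange B t := ht.symm
      rw [LinearMap.mem_ker, LinearMap.comp_apply]
      show ψ₀ x = 0
      rw [hxval]
      have : ψ₀ (d1.baseChange B t) = (((q ∘ₗ r2) ∘ₗ d1).baseChange B) t := by
        rw [LinearMap.baseChange_comp, LinearMap.comp_apply]
      rw [this, hqr2d1]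
      simp)
  have hψφ : ∀ t, ψ (cohBaseChange A B d1 d2 t) = t := by
    intro t
    induction t using TensorProduct.induction_on with
    | zero => simp
    | tmul c m =>
      obtain ⟨z, rfl⟩ := Submodule.Quotient.mk_surjective _ m
      have h : c ⊗ₜ[A] (z : F2) ∈ LinearMap.ker (d2.baseChange B) := by
        simpa using ker_subtype_baseChange_mem d2 (c ⊗ₜ z)
      rw [cohBaseChange_tmul d1 d2 c z h]
      show (ψ₀ ∘ₗ (LinearMap.ker (d2.baseChange B)).subtype) ⟨c ⊗ₜ[A] (z : F2), h⟩ = _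
      simp only [LinearMap.coe_comp, Function.comp_apply, Submodule.coe_subtype]
      show ((q ∘ₗ r2).baseChange B) (c ⊗ₜ[A] (z : F2)) = c ⊗ₜ Submodule.Quotient.mk z
      rw [LinearMap.baseChange_tmul]
      simp only [LinearMap.coe_comp, Function.comp_apply, hr2 z]
      rfl
    | add t1 t2 h1 h2 =>
      rw [map_add, map_add, h1, h2]
  constructor
  · exact Function.LeftInverse.injective hψφ
  · -- surjectivity
    rw [← LinearMap.range_eq_top, range_cohBaseChange d1 d2 (k := B), LinearMap.range_eq_top]
    intro y
    obtain ⟨⟨x, hx⟩, rfl⟩ := Submodule.Quotient.mk_surjective _ y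
    obtain ⟨w, hw⟩ := hkerB x hx
    refine ⟨w, ?_⟩
    simp only [LinearMap.coe_comp, Function.comp_apply, Submodule.mkQ_apply]
    congr 1
    exact Subtype.ext hw
end
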